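/- For every odd n ≥ 1 and every k with (n+1)/2 ≤ k ≤ n, one has Σ_{ν=0}^k C(2k-ν, k)·C(n,ν)·G_{n+1-ν}/(n+1-ν) = 0, where G_m = 2(1-2^m)·B_m are the Genocchi numbers and B_m the Bernoulli numbers. -/

import Mathlib

open Finset Nat PowerSeries


lemma rescale_two_bps : rescale (2:ℚ) (PowerSeries.mk fun n => bernoulli n / n !) * (exp ℚ + 1)
    = 2 * (PowerSeries.mk fun n => bernoulli n / n !) := by
  set B : PowerSeries ℚ := mk fun n => bernoulli n / n ! with hBdef
  have hB : B * (exp ℚ - 1) = X := by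
    simpa [bernoulliPowerSeries] using bernoulliPowerSeries_mul_exp_sub_one ℚ
  have hexp : exp ℚ - 1 ≠ 0 := by
    intro h
    have := congrArg (coeff 1) h
    simp [coeff_exp] at this
  apply mul_right_cancel₀ hexp
  have hres : rescale (2:ℚ) (B * (exp ℚ - 1)) = rescale (2:ℚ) X := by rw [hB]
  rw [map_mul] at hres
  have h2 : rescale (2:ℚ) (exp ℚ - 1) = (exp ℚ - 1) * (exp ℚ + 1) := by
    rw [map_sub, map_one]
    have : rescale (2:ℚ) (exp ℚ) = exp ℚ ^ 2 := by
      rw [exp_pow_eq_rescale_exp]; norm_num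
    rw [this]; ring
  have hC : (2 : ℚ⟦X⟧) = C 2 := by rw [map_ofNat]
  have hX : rescale (2:ℚ) X = 2 * X := by
    ext n
    rw [hC, coeff_rescale, coeff_C_mul, coeff_X]
    split <;> simp_all
  calc rescale (2:ℚ) B * (exp ℚ + 1) * (exp ℚ - 1)
      = rescale (2:ℚ) B * rescale (2:ℚ) (exp ℚ - 1) := by rw [h2]; ring
    _ = 2 * X := by rw [hres, hX]
    _ = 2 * (B * (exp ℚ - 1)) := by rw [hB]
    _ = 2 * B * (exp ℚ - 1) := by ring

lemma sum_choose_two_pow_bernoulli (M : ℕ) :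
    ∑ t ∈ range (M+1), (M.choose t : ℚ) * 2^t * bernoulli t = (2 - 2^M) * bernoulli M := by
  have hfac : ∀ m : ℕ, (m ! : ℚ) ≠ 0 := fun m => by exact_mod_cast m.factorial_ne_zero
  have hcoeff := congrArg (coeff M) rescale_two_bps
  have hC : (2 : ℚ⟦X⟧) = C 2 := by rw [map_ofNat]
  rw [PowerSeries.coeff_mul, Finset.Nat.sum_antidiagonal_eq_sum_range_succ_mk, hC, coeff_C_mul,
    coeff_mk] at hcoeff
  simp only [map_add, coeff_one, coeff_exp, coeff_rescale, coeff_mk,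
    Algebra.algebraMap_self_apply, mul_add] at hcoeff
  rw [sum_add_distrib] at hcoeff
  have h2 : ∑ t ∈ range (M+1), 2^t * (bernoulli t / t !) * (if M - t = 0 then (1:ℚ) else 0)
      = 2^M * (bernoulli M / M !) := by
    rw [Finset.sum_congr rfl (g := fun t => if t = M then 2^M * (bernoulli M / M !) else 0)
      (fun t ht => ?_), Finset.sum_ite_eq' (range (M+1)) M]
    · simp
    · rcases eq_or_ne t M with rfl | h
      · simp
      · have : M - t ≠ 0 := by
          rw [mem_range] at ht; omega
        simp [this, h]
  rw [h2] at hcoeff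
  have h3 : ∑ t ∈ range (M+1), (M.choose t : ℚ) * 2^t * bernoulli t
      = (M ! : ℚ) * ∑ t ∈ range (M+1), 2^t * (bernoulli t / t !) * (1/(M-t)!) := by
    rw [mul_sum]
    refine sum_congr rfl fun t ht => ?_
    rw [mem_range] at ht
    have hle : t ≤ M := by omega
    rw [Nat.cast_choose ℚ hle]
    field_simp
  rw [h3, eq_sub_of_add_eq hcoeff]
  field_simp

noncomputable def genA (m : ℕ) : ℚ := 2 * (1 - 2^(m+1)) * bernoulli (m+1) / (m+1)

lemma genA_zero : genA 0 = 1 := by norm_num [genA]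

lemma genA_even (m : ℕ) (h : Even m) (h0 : m ≠ 0) : genA m = 0 := by
  have h1 : bernoulli (m+1) = 0 := by
    rw [bernoulli_eq_bernoulli'_of_ne_one (by omega), bernoulli'_eq_zero_of_odd h.add_one (by omega)]
  simp [genA, h1]

lemma genA_rec (m : ℕ) :
    ∑ i ∈ range (m+1), (m.choose i : ℚ) * genA i = (if m = 0 then 2 else 0) - genA m := by
  have hm1 : ((m:ℚ)+1) ≠ 0 := by positivity
  have step1 : ∀ i ∈ range (m+1), (m.choose i : ℚ) * genA i
      = 2/((m:ℚ)+1) * (((m+1).choose (i+1) : ℚ) * (1 - 2^(i+1)) * bernoulli (i+1)) := by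
    intro i _
    have h := Nat.add_one_mul_choose_eq m i
    have hq : ((m:ℚ)+1) * (m.choose i : ℚ) = ((m+1).choose (i+1) : ℚ) * ((i:ℚ)+1) := by
      exact_mod_cast congrArg (Nat.cast (R := ℚ)) h
    have hi1 : ((i:ℚ)+1) ≠ 0 := by positivity
    rw [genA]
    field_simp at hq ⊢
    linear_combination ((1 - 2^(i+1)) * bernoulli (i+1)) * hq
  rw [sum_congr rfl step1, ← mul_sum]
  have step2 : ∑ i ∈ range (m+1), (((m+1).choose (i+1) : ℚ) * (1 - 2^(i+1)) * bernoulli (i+1))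
      = ∑ t ∈ range (m+2), (((m+1).choose t : ℚ) * (1 - 2^t) * bernoulli t) := by
    rw [Finset.sum_range_succ' (fun t => (((m+1).choose t : ℚ) * (1 - 2^t) * bernoulli t)) (m+1)]
    norm_num
  rw [step2]
  have step3 : ∑ t ∈ range (m+2), (((m+1).choose t : ℚ) * (1 - 2^t) * bernoulli t)
      = (∑ t ∈ range (m+2), ((m+1).choose t : ℚ) * bernoulli t)
        - ∑ t ∈ range (m+2), ((m+1).choose t : ℚ) * 2^t * bernoulli t := by
    rw [← sum_sub_distrib]; apply sum_congr rfl; intros; ring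
  have step4 : ∑ t ∈ range (m+2), ((m+1).choose t : ℚ) * bernoulli t
      = (if m = 0 then 1 else 0) + bernoulli (m+1) := by
    rw [Finset.sum_range_succ, sum_bernoulli]
    simp only [Nat.choose_self, Nat.cast_one, one_mul]
    congr 1
    by_cases h : m = 0 <;> simp [h]
  rw [step3, step4, sum_choose_two_pow_bernoulli (m+1), genA]
  by_cases h : m = 0
  · subst h; norm_num
  · simp only [h, if_false]
    field_simp
    ring

lemma genA_def (m : ℕ) : genA m = 2 * (1 - 2^(m+1)) * bernoulli (m+1) / (m+1) := rfl

lemma choose_alt (k : ℕ) : ∀ μ, ∀ m, μ ≤ m →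
    ∑ ν ∈ range (μ+1), (-1:ℚ)^ν * (μ.choose ν : ℚ) * ((m-ν).choose k : ℚ)
    = if μ ≤ k then ((m-μ).choose (k-μ) : ℚ) else 0 := by
  intro μ
  induction μ with
  | zero => intro m _; simp
  | succ μ IH =>
    intro m hm
    have key : ∑ ν ∈ range (μ+2), (-1:ℚ)^ν * ((μ+1).choose ν : ℚ) * ((m-ν).choose k : ℚ)
        = (∑ ν ∈ range (μ+1), (-1:ℚ)^ν * (μ.choose ν : ℚ) * ((m-ν).choose k : ℚ))
          - ∑ ν ∈ range (μ+1), (-1:ℚ)^ν * (μ.choose ν : ℚ) * ((m-1-ν).choose k : ℚ) := by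
      rw [Finset.sum_range_succ'
        (fun ν => (-1:ℚ)^ν * ((μ+1).choose ν : ℚ) * ((m-ν).choose k : ℚ)) (μ+1)]
      have hsp : ∀ i, (-1:ℚ)^(i+1) * ((μ+1).choose (i+1) : ℚ) * ((m-(i+1)).choose k : ℚ)
          = (-1:ℚ)^(i+1) * ((μ).choose (i+1) : ℚ) * ((m-(i+1)).choose k : ℚ)
            - (-1:ℚ)^i * ((μ).choose i : ℚ) * ((m-1-i).choose k : ℚ) := by
        intro i
        rw [Nat.choose_succ_succ, Nat.sub_sub, Nat.add_comm 1 i]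
        push_cast
        ring
      rw [Finset.sum_congr rfl (fun i _ => hsp i), Finset.sum_sub_distrib]
      have h0 : ∑ x ∈ range (μ+1), (-1:ℚ)^(x+1) * (μ.choose (x+1):ℚ) * ((m-(x+1)).choose k:ℚ)
          = ∑ x ∈ range μ, (-1:ℚ)^(x+1) * (μ.choose (x+1):ℚ) * ((m-(x+1)).choose k:ℚ) := by
        rw [Finset.sum_range_succ]
        simp [Nat.choose_succ_self]
      have hsum' := Finset.sum_range_succ'
        (fun ν => (-1:ℚ)^ν * ((μ).choose ν : ℚ) * ((m-ν).choose k : ℚ)) μ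
      simp only [Nat.choose_zero_right, Nat.cast_one, one_mul, pow_zero, Nat.sub_zero]
        at hsum' ⊢
      rw [h0]
      linarith [hsum']
    rw [key, IH m (by omega), IH (m-1) (by omega)]
    by_cases h1 : μ + 1 ≤ k
    · rw [if_pos (by omega), if_pos (by omega), if_pos h1]
      have e1 : m - μ = (m - (μ+1)) + 1 := by omega
      have e2 : k - μ = (k - (μ+1)) + 1 := by omega
      have e3 : m - 1 - μ = m - (μ+1) := by omega
      rw [e1, e2, e3, Nat.choose_succ_succ]
      push_cast
      ring
    · by_cases h2 : μ ≤ k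
      · have hk : k - μ = 0 := by omega
        rw [if_pos h2, if_pos h2, if_neg h1, hk]
        simp
      · rw [if_neg h2, if_neg h2, if_neg h1]
        simp

lemma genA_rec' (M : ℕ) :
    ∑ i ∈ range (M+1), (M.choose i : ℚ) * genA (M-i) = (if M = 0 then 2 else 0) - genA M := by
  rw [← genA_rec M, ← Finset.sum_range_reflect (fun i => (M.choose i : ℚ) * genA i) (M+1)]
  refine Finset.sum_congr rfl fun i hi => ?_
  rw [mem_range] at hi
  have h1 : M + 1 - 1 - i = M - i := by omega
  rw [h1, Nat.choose_symm (by omega)]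

lemma genE_reflect (n : ℕ) (hn : Odd n) (j : ℕ) (hj : j ≤ n) :
    ∑ ν ∈ range (n+1), (-1:ℚ)^j * (ν.choose j : ℚ) * ((n.choose ν : ℚ) * genA (n-ν))
    = -((n.choose j : ℚ) * genA (n-j)) := by
  have h1 : ∑ ν ∈ range (n+1), (-1:ℚ)^j * (ν.choose j : ℚ) * ((n.choose ν : ℚ) * genA (n-ν))
      = ∑ ν ∈ Ico j (n+1), (-1:ℚ)^j * (ν.choose j : ℚ) * ((n.choose ν : ℚ) * genA (n-ν)) := by
    refine (Finset.sum_subset (fun x hx => ?_) (fun x hx hx' => ?_)).symm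
    · rw [mem_Ico] at hx; rw [mem_range]; omega
    · rw [mem_range] at hx; rw [mem_Ico] at hx'
      have : x < j := by omega
      rw [Nat.choose_eq_zero_of_lt this]
      simp
  rw [h1, Finset.sum_Ico_eq_sum_range]
  have h2 : n + 1 - j = (n - j) + 1 := by omega
  rw [h2]
  have h3 : ∀ i ∈ range ((n-j)+1), (-1:ℚ)^j * ((j+i).choose j : ℚ) * ((n.choose (j+i) : ℚ) * genA (n-(j+i)))
      = (-1:ℚ)^j * (n.choose j : ℚ) * (((n-j).choose i : ℚ) * genA ((n-j)-i)) := by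
    intro i hi
    rw [mem_range] at hi
    have hc := Nat.choose_mul (n := n) (k := j+i) (s := j) (by omega)
    have e1 : j + i - j = i := by omega
    have e2 : n - (j + i) = n - j - i := by omega
    rw [e1] at hc
    rw [e2]
    have hcq : (n.choose (j+i) : ℚ) * ((j+i).choose j : ℚ)
        = (n.choose j : ℚ) * ((n-j).choose i : ℚ) := by exact_mod_cast congrArg (Nat.cast (R := ℚ)) hc
    linear_combination ((-1:ℚ)^j * genA (n-j-i)) * hcq
  rw [Finset.sum_congr rfl h3]
  have h4 : ∑ i ∈ range ((n-j)+1), (-1:ℚ)^j * (n.choose j : ℚ) * (((n-j).choose i : ℚ) * genA ((n-j)-i))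
      = (-1:ℚ)^j * (n.choose j : ℚ) * ((if n - j = 0 then 2 else 0) - genA (n-j)) := by
    rw [← genA_rec' (n-j), Finset.mul_sum]
  rw [h4]
  by_cases hjn : j = n
  · subst hjn
    rw [Nat.sub_self, if_pos rfl, genA_zero, hn.neg_one_pow]
    ring
  · rw [if_neg (by omega)]
    rcases Nat.even_or_odd j with hje | hjo
    · rw [hje.neg_one_pow]; ring
    · have : Even (n - j) := by
        rcases hn with ⟨a, ha⟩; rcases hjo with ⟨b, hb⟩
        exact ⟨a - b, by omega⟩
      rw [genA_even (n-j) this (by omega), hjo.neg_one_pow]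
      ring

/-- Vanishing sums for the Genocchi numbers `G_m = 2(1-2^m)·B_m`. -/
theorem genocchi_vanishing_sum (n k : ℕ) (hn : Odd n)
    (hk1 : (n + 1) / 2 ≤ k) (hk2 : k ≤ n) :
    ∑ ν ∈ Finset.range (k + 1),
      ((2 * k - ν).choose k : ℚ) * (n.choose ν : ℚ) *
        (2 * (1 - 2 ^ (n + 1 - ν)) * bernoulli (n + 1 - ν) / ((n : ℚ) + 1 - ν)) = 0 := by
  have h2k : n + 1 ≤ 2 * k := by obtain ⟨t, ht⟩ := hn; omega
  set e : ℕ → ℚ := fun ν => (n.choose ν : ℚ) * genA (n - ν) with he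
  set c : ℕ → ℚ := fun ν => ((2 * k - ν).choose k : ℚ) with hc
  -- rewrite each term of the original sum
  have hterm : ∀ ν ∈ range (k+1),
      ((2 * k - ν).choose k : ℚ) * (n.choose ν : ℚ) *
        (2 * (1 - 2 ^ (n + 1 - ν)) * bernoulli (n + 1 - ν) / ((n : ℚ) + 1 - ν))
      = c ν * e ν := by
    intro ν hν
    rw [mem_range] at hν
    have hνn : ν ≤ n := by omega
    have e1 : n + 1 - ν = (n - ν) + 1 := by omega
    have e2 : ((n : ℚ) + 1 - ν) = ((n - ν : ℕ) : ℚ) + 1 := by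
      rw [Nat.cast_sub hνn]; ring
    rw [e1, e2]
    simp only [he, hc]
    rw [genA_def (n - ν)]
    ring
  rw [Finset.sum_congr rfl hterm]
  -- extend the sum to range (n+1)
  have hext : ∑ ν ∈ range (k+1), c ν * e ν = ∑ ν ∈ range (n+1), c ν * e ν := by
    refine Finset.sum_subset (fun x hx => ?_) (fun x hx hx' => ?_)
    · rw [mem_range] at hx ⊢; omega
    · rw [mem_range] at hx hx'
      have : 2 * k - x < k := by omega
      rw [hc]
      simp [Nat.choose_eq_zero_of_lt this]
  rw [hext]
  set T := ∑ ν ∈ range (n+1), c ν * e ν with hT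
  -- T = -T
  have key : T = -T := by
    calc T = ∑ j ∈ range (n+1), c j * e j := hT
      _ = ∑ j ∈ range (n+1), c j *
            (-∑ ν ∈ range (n+1), (-1:ℚ)^j * (ν.choose j : ℚ) * e ν) := by
          refine Finset.sum_congr rfl fun j hj => ?_
          rw [mem_range] at hj
          have hrf := genE_reflect n hn j (by omega)
          simp only [he]
          rw [hrf]
          ring
      _ = -∑ j ∈ range (n+1), ∑ ν ∈ range (n+1),
            (-1:ℚ)^j * (ν.choose j : ℚ) * c j * e ν := by
          rw [← Finset.sum_neg_distrib]
          refine Finset.sum_congr rfl fun j _ => ?_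
          rw [mul_neg, Finset.mul_sum, ← Finset.sum_neg_distrib, Finset.sum_neg_distrib]
          exact congrArg Neg.neg (Finset.sum_congr rfl fun ν _ => by ring)
      _ = -∑ ν ∈ range (n+1), (∑ j ∈ range (n+1),
            (-1:ℚ)^j * (ν.choose j : ℚ) * c j) * e ν := by
          rw [Finset.sum_comm]
          congr 1
          refine Finset.sum_congr rfl fun ν _ => ?_
          rw [Finset.sum_mul]
      _ = -∑ ν ∈ range (n+1), c ν * e ν := by
          congr 1
          refine Finset.sum_congr rfl fun ν hν => ?_
          rw [mem_range] at hν
          suffices hinner : ∑ j ∈ range (n+1), (-1:ℚ)^j * (ν.choose j : ℚ) * c j = c ν by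
            rw [hinner]
          have hrestrict : ∑ j ∈ range (n+1), (-1:ℚ)^j * (ν.choose j : ℚ) * c j
              = ∑ j ∈ range (ν+1), (-1:ℚ)^j * (ν.choose j : ℚ) * c j := by
            refine (Finset.sum_subset (fun x hx => ?_) (fun x hx hx' => ?_)).symm
            · rw [mem_range] at hx ⊢; omega
            · rw [mem_range] at hx hx'
              rw [Nat.choose_eq_zero_of_lt (by omega)]
              simp
          have halt := choose_alt k ν (2*k) (by omega)
          rw [hrestrict]
          simp only [hc]
          rw [halt]
          by_cases hνk : ν ≤ k
          · rw [if_pos hνk]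
            rw [show k - ν = 2*k - ν - k by omega, Nat.choose_symm (by omega)]
          · rw [if_neg hνk, Nat.choose_eq_zero_of_lt (show 2*k - ν < k by omega)]
            simp
      _ = -T := by rw [hT]
  linarith
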